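/- Let X, Y : H0 -> H1 be bounded operators between complex Hilbert spaces with ||X|| <= 1 and ||Y|| <= 1. Then Ker(I + Y*X) = Ker(X + Y) ∩ Ker(I - X*X) ∩ Ker(I - Y*Y); in particular Ker(I + Y*X) = Ker(I + X*Y). -/

import Mathlib

open ContinuousLinearMap

private lemma aux_isom {H0 H1 : Type*}
    [NormedAddCommGroup H0] [InnerProductSpace ℂ H0] [CompleteSpace H0]
    [NormedAddCommGroup H1] [InnerProductSpace ℂ H1] [CompleteSpace H1]
    (A : H0 →L[ℂ] H1) (hA : ‖A‖ ≤ 1) (x : H0) (h : ‖x‖ ≤ ‖A x‖) :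
    ContinuousLinearMap.adjoint A (A x) = x := by
  have hAx : ‖A x‖ ≤ ‖x‖ := (A.le_opNorm x).trans (by nlinarith [norm_nonneg x])
  have heq : ‖A x‖ = ‖x‖ := le_antisymm hAx h
  have hnadj : ‖ContinuousLinearMap.adjoint A‖ = ‖A‖ :=
    (ContinuousLinearMap.adjoint : (H0 →L[ℂ] H1) ≃ₗᵢ⋆[ℂ] _).norm_map A
  have hAd : ‖ContinuousLinearMap.adjoint A (A x)‖ ≤ ‖x‖ := by
    have := (ContinuousLinearMap.adjoint A).le_opNorm (A x)
    rw [hnadj] at this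
    nlinarith [norm_nonneg (A x)]
  have hre : RCLike.re (inner (𝕜 := ℂ) x (ContinuousLinearMap.adjoint A (A x))) = ‖A x‖ ^ 2 := by
    rw [A.adjoint_inner_right]
    exact inner_self_eq_norm_sq (𝕜 := ℂ) (A x)
  have hkey : ‖x - ContinuousLinearMap.adjoint A (A x)‖ ^ 2 ≤ 0 := by
    rw [@norm_sub_sq ℂ, hre]
    nlinarith [hAd, heq, norm_nonneg (ContinuousLinearMap.adjoint A (A x)), norm_nonneg x]
  have : ‖x - ContinuousLinearMap.adjoint A (A x)‖ = 0 := by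
    nlinarith [norm_nonneg (x - ContinuousLinearMap.adjoint A (A x))]
  exact (sub_eq_zero.mp (norm_eq_zero.mp this)).symm

private lemma aux_key {H0 H1 : Type*}
    [NormedAddCommGroup H0] [InnerProductSpace ℂ H0] [CompleteSpace H0]
    [NormedAddCommGroup H1] [InnerProductSpace ℂ H1] [CompleteSpace H1]
    (X Y : H0 →L[ℂ] H1) (hX : ‖X‖ ≤ 1) (hY : ‖Y‖ ≤ 1) (x : H0) :
    x + ContinuousLinearMap.adjoint Y (X x) = 0 ↔
      (X x + Y x = 0 ∧ ContinuousLinearMap.adjoint X (X x) = x ∧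
        ContinuousLinearMap.adjoint Y (Y x) = x) := by
  have hnadj : ‖ContinuousLinearMap.adjoint Y‖ = ‖Y‖ :=
    (ContinuousLinearMap.adjoint : (H0 →L[ℂ] H1) ≃ₗᵢ⋆[ℂ] _).norm_map Y
  constructor
  · intro hx
    have hx' : ContinuousLinearMap.adjoint Y (X x) = -x := eq_neg_of_add_eq_zero_right hx
    have hnx : ‖ContinuousLinearMap.adjoint Y (X x)‖ = ‖x‖ := by rw [hx', norm_neg]
    have hXle : ‖X x‖ ≤ ‖x‖ := (X.le_opNorm x).trans (by nlinarith [norm_nonneg x])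
    have hxle : ‖x‖ ≤ ‖X x‖ := by
      have := (ContinuousLinearMap.adjoint Y).le_opNorm (X x)
      rw [hnx, hnadj] at this
      nlinarith [norm_nonneg (X x)]
    have h1 : ContinuousLinearMap.adjoint X (X x) = x := aux_isom X hX x hxle
    have h2 : Y (ContinuousLinearMap.adjoint Y (X x)) = X x := by
      have := aux_isom (ContinuousLinearMap.adjoint Y) (by rw [hnadj]; exact hY) (X x)
        (by rw [hnx]; exact hXle)
      rwa [ContinuousLinearMap.adjoint_adjoint] at this
    have hYx : Y x = -X x := by
      rw [hx', map_neg] at h2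
      exact neg_eq_iff_eq_neg.mp h2
    refine ⟨by rw [hYx]; abel, h1, ?_⟩
    rw [hYx, map_neg, hx', neg_neg]
  · rintro ⟨hsum, -, hYY⟩
    have hXx : X x = -Y x := eq_neg_of_add_eq_zero_left hsum
    rw [hXx, map_neg, hYY]
    abel

/-- Let `X, Y : H₀ → H₁` be contractions between complex Hilbert spaces.
Then `Ker (I + Y* X) = Ker (X + Y) ⊓ Ker (I - X* X) ⊓ Ker (I - Y* Y)`; in particular
`Ker (I + Y* X) = Ker (I + X* Y)`. -/
theorem ker_one_add_adjoint_comp_eq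
    {H0 H1 : Type*}
    [NormedAddCommGroup H0] [InnerProductSpace ℂ H0] [CompleteSpace H0]
    [NormedAddCommGroup H1] [InnerProductSpace ℂ H1] [CompleteSpace H1]
    (X Y : H0 →L[ℂ] H1) (hX : ‖X‖ ≤ 1) (hY : ‖Y‖ ≤ 1) :
    LinearMap.ker ((ContinuousLinearMap.id ℂ H0 + (ContinuousLinearMap.adjoint Y).comp X : H0 →L[ℂ] H0) : H0 →ₗ[ℂ] H0) =
      LinearMap.ker ((X + Y : H0 →L[ℂ] H1) : H0 →ₗ[ℂ] H1) ⊓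
      LinearMap.ker ((ContinuousLinearMap.id ℂ H0 - (ContinuousLinearMap.adjoint X).comp X : H0 →L[ℂ] H0) : H0 →ₗ[ℂ] H0) ⊓
      LinearMap.ker ((ContinuousLinearMap.id ℂ H0 - (ContinuousLinearMap.adjoint Y).comp Y : H0 →L[ℂ] H0) : H0 →ₗ[ℂ] H0) ∧
    LinearMap.ker ((ContinuousLinearMap.id ℂ H0 + (ContinuousLinearMap.adjoint Y).comp X : H0 →L[ℂ] H0) : H0 →ₗ[ℂ] H0) =
      LinearMap.ker ((ContinuousLinearMap.id ℂ H0 + (ContinuousLinearMap.adjoint X).comp Y : H0 →L[ℂ] H0) : H0 →ₗ[ℂ] H0) := by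
  constructor
  · ext x
    simp only [LinearMap.mem_ker, Submodule.mem_inf, ContinuousLinearMap.add_apply,
      ContinuousLinearMap.sub_apply, ContinuousLinearMap.comp_apply,
      ContinuousLinearMap.id_apply, sub_eq_zero, ContinuousLinearMap.coe_coe]
    rw [aux_key X Y hX hY x]
    constructor
    · rintro ⟨h1, h2, h3⟩; exact ⟨⟨h1, h2.symm⟩, h3.symm⟩
    · rintro ⟨⟨h1, h2⟩, h3⟩; exact ⟨h1, h2.symm, h3.symm⟩
  · ext x
    simp only [LinearMap.mem_ker, ContinuousLinearMap.add_apply,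
      ContinuousLinearMap.comp_apply, ContinuousLinearMap.id_apply, ContinuousLinearMap.coe_coe]
    rw [aux_key X Y hX hY x, aux_key Y X hY hX x]
    constructor
    · rintro ⟨h1, h2, h3⟩; exact ⟨by rw [add_comm]; exact h1, h3, h2⟩
    · rintro ⟨h1, h2, h3⟩; exact ⟨by rw [add_comm]; exact h1, h3, h2⟩
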